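/- Let A ≥ b > 0 be real numbers, set σ = e^{−b/2} and θ = b/(2A − b). Then for every integer n ≥ 1 and every sequence of real numbers c_0, c_1, …, c_{n−1} satisfying c_j ≥ −A for all j and ∑_{j=0}^{n−1} c_j ≤ −b·n, there exist at least θ·n integers i with 1 ≤ i ≤ n such that ∑_{j=i−k}^{i−1} c_j ≤ k·log σ for every integer k with 1 ≤ k ≤ i. -/

import Mathlib

/-- Existence of a positive frequency of σ-hyperbolic times (sequence form). -/
theorem hyperbolic_times_frequency (A b : ℝ) (hb : 0 < b) (hA : b ≤ A)
    (n : ℕ) (hn : 1 ≤ n) (c : ℕ → ℝ)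
    (hc : ∀ j, j < n → -A ≤ c j)
    (hsum : ∑ j ∈ Finset.range n, c j ≤ -b * n) :
    ∃ S : Finset ℕ, S ⊆ Finset.Icc 1 n ∧ b / (2 * A - b) * n ≤ (S.card : ℝ) ∧
      ∀ i ∈ S, ∀ k, 1 ≤ k → k ≤ i →
        ∑ j ∈ Finset.Icc (i - k) (i - 1), c j ≤
          (k : ℝ) * Real.log (Real.exp (-(b / 2))) := by
  classical
  have hb2 : (0:ℝ) < A - b/2 := by linarith
  set S : ℕ → ℝ := fun m => ∑ j ∈ Finset.range m, (-(c j) - b/2) with hSdef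
  set P : ℕ → Prop := fun i => ∀ m ∈ Finset.range i, S m ≤ S i with hPdef
  set M : ℕ → ℝ := fun i => (Finset.range (i+1)).sup' ⟨0, by simp⟩ S with hMdef
  set G : ℕ → ℕ := fun i => ((Finset.Icc 1 i).filter P).card with hGdef
  have hMle : ∀ m i, m ≤ i → S m ≤ M i := by
    intro m i h
    exact Finset.le_sup' S (by simp [Finset.mem_range]; omega)
  have hMsucc : ∀ i, M (i+1) = max (S (i+1)) (M i) := by
    intro i
    have h : Finset.range (i+1+1) = insert (i+1) (Finset.range (i+1)) := by
      rw [Finset.range_add_one]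
    simp only [hMdef, h]
    rw [Finset.sup'_insert]
    exact ⟨0, by simp⟩
  have hGmono : ∀ i, G i ≤ G (i+1) := by
    intro i
    apply Finset.card_le_card
    exact Finset.filter_subset_filter _ (Finset.Icc_subset_Icc_right (by omega))
  have key : ∀ i, i ≤ n → M i ≤ G i * (A - b/2) := by
    intro i
    induction i with
    | zero =>
      intro _
      have h0 : M 0 = 0 := by simp [hMdef, hSdef]
      rw [h0]
      positivity
    | succ i ih =>
      intro hin
      have ih' := ih (by omega)
      rw [hMsucc]
      rcases le_or_gt (S (i+1)) (M i) with h | h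
      · rw [max_eq_right h]
        calc M i ≤ G i * (A - b/2) := ih'
          _ ≤ G (i+1) * (A - b/2) := by
            apply mul_le_mul_of_nonneg_right _ hb2.le
            exact_mod_cast hGmono i
      · have hgood : P (i+1) := by
          intro m hm
          simp only [Finset.mem_range] at hm
          exact (hMle m i (by omega)).trans h.le
        have hGsucc : G i + 1 ≤ G (i+1) := by
          have hsub : insert (i+1) ((Finset.Icc 1 i).filter P) ⊆
              (Finset.Icc 1 (i+1)).filter P := by
            intro x hx
            simp only [Finset.mem_insert, Finset.mem_filter, Finset.mem_Icc] at hx ⊢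
            rcases hx with rfl | ⟨⟨h1, h2⟩, hp⟩
            · exact ⟨⟨by omega, le_refl _⟩, hgood⟩
            · exact ⟨⟨h1, by omega⟩, hp⟩
          have hcard := Finset.card_le_card hsub
          have hnm : (i+1) ∉ (Finset.Icc 1 i).filter P := by
            intro hmem
            have := (Finset.mem_Icc.1 (Finset.mem_filter.1 hmem).1).2
            omega
          rwa [Finset.card_insert_of_notMem hnm] at hcard
        have hstep : S (i+1) ≤ M i + (A - b/2) := by
          have h1 : S (i+1) = S i + (-(c i) - b/2) :=
            Finset.sum_range_succ (fun j => -(c j) - b/2) i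
          have h2 := hc i (by omega)
          have h3 := hMle i i le_rfl
          linarith
        rw [max_eq_left h.le]
        calc S (i+1) ≤ M i + (A - b/2) := hstep
          _ ≤ G i * (A - b/2) + (A - b/2) := by linarith
          _ = ((G i : ℝ) + 1) * (A - b/2) := by ring
          _ ≤ G (i+1) * (A - b/2) := by
            apply mul_le_mul_of_nonneg_right _ hb2.le
            exact_mod_cast hGsucc
  refine ⟨(Finset.Icc 1 n).filter P, Finset.filter_subset _ _, ?_, ?_⟩
  · have h1 := key n le_rfl
    have h2 : S n ≤ M n := hMle n n le_rfl
    have hSn : S n = -(∑ j ∈ Finset.range n, c j) - (b/2) * n := by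
      simp [hSdef, Finset.sum_sub_distrib, Finset.sum_neg_distrib, mul_comm]
    have h3 : (b/2) * n ≤ S n := by
      rw [hSn]
      have : (0:ℝ) ≤ n := Nat.cast_nonneg n
      nlinarith
    have h2Ab : (0:ℝ) < 2 * A - b := by linarith
    rw [div_mul_eq_mul_div, div_le_iff₀ h2Ab]
    have h4 : (b/2) * n ≤ (G n : ℝ) * (A - b/2) := le_trans h3 (le_trans h2 h1)
    nlinarith
  · intro i hi k hk hki
    have hPi : P i := (Finset.mem_filter.1 hi).2
    have hIcc1 : i ∈ Finset.Icc 1 n := (Finset.mem_filter.1 hi).1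
    have hi1 : 1 ≤ i := (Finset.mem_Icc.1 hIcc1).1
    have hgood : S (i - k) ≤ S i := hPi (i - k) (by simp [Finset.mem_range]; omega)
    have hIcc : Finset.Icc (i - k) (i - 1) = Finset.Ico (i - k) i := by
      rw [← Finset.Ico_add_one_right_eq_Icc]
      congr 1
      omega
    have hsub : i - (i - k) = k := by omega
    have hdiff : S i - S (i - k) =
        -(∑ j ∈ Finset.Ico (i - k) i, c j) - (b/2) * k := by
      rw [hSdef]
      rw [← Finset.sum_Ico_eq_sub _ (show i - k ≤ i by omega)]
      simp [Finset.sum_sub_distrib, Finset.sum_neg_distrib, Nat.card_Ico, hsub, mul_comm]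
    have hlog : Real.log (Real.exp (-(b / 2))) = -(b/2) := Real.log_exp _
    rw [hIcc, hlog]
    have h0 : 0 ≤ S i - S (i - k) := by linarith
    rw [hdiff] at h0
    nlinarith [(Nat.cast_pos.2 (show 0 < k by omega) : (0:ℝ) < (k:ℝ))]
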